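/- Let q ≥ 2 and x ≥ 1 be integers. Then the limit L = lim_{m→∞} (log₂ N_q(m,x))/m exists, and the asymptotic rate of the self-clocked QA-LOCO code matches it: lim_{m→∞} (log₂(N_q(m,x) − 2))/(m + x) = L. In other words, self-clocked QA-LOCO codes are capacity-achieving for the Q^q_x constraint. -/

import Mathlib

/-- A word `w` of length `m` over the alphabet `{0, ..., q-1}` (with `w ⟨m-1,_⟩` the
leftmost/most significant symbol) is admissible for the `Q^q_x` constraint if it contains
no forbidden pattern `(q-1) δ^r (q-1)` with `1 ≤ r ≤ x` and each symbol of `δ^r` at most `q-2`. -/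
def IsAdmissible (q x m : ℕ) (w : Fin m → Fin q) : Prop :=
  ∀ (i r : ℕ) (_hr1 : 1 ≤ r) (_hr2 : r ≤ x) (h : i + r + 1 < m),
    ¬((w ⟨i + r + 1, h⟩ : ℕ) = q - 1 ∧
      (w ⟨i, by omega⟩ : ℕ) = q - 1 ∧
      ∀ (j : ℕ) (_hj1 : 1 ≤ j) (_hj2 : j ≤ r), (w ⟨i + j, by omega⟩ : ℕ) ≤ q - 2)

/-- `Nadm q x m` is the number of admissible words of length `m`. -/
noncomputable def Nadm (q x m : ℕ) : ℕ :=
  Nat.card {w : Fin m → Fin q // IsAdmissible q x m w}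

/-- Lexicographic comparison of words of equal length: `w < w'` iff at the highest
index where they differ `w` has the smaller symbol. -/
def LexLt {q m : ℕ} (w w' : Fin m → Fin q) : Prop :=
  ∃ i : Fin m, w i < w' i ∧ ∀ j : Fin m, i < j → w j = w' j

/-- The lexicographic rank of a word among admissible words of its length. -/
noncomputable def rankOf (q x m : ℕ) (w : Fin m → Fin q) : ℕ :=
  Nat.card {v : Fin m → Fin q // IsAdmissible q x m v ∧ LexLt v w}

/-- Auxiliary "staircase" word: `q-1` on high indices, `0` below. -/
def stairWord (q m t : ℕ) (hq : 2 ≤ q) : Fin m → Fin q :=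
  fun i => if t ≤ (i : ℕ) then ⟨q - 1, by omega⟩ else ⟨0, by omega⟩

lemma stairWord_adm (q x m t : ℕ) (hq : 2 ≤ q) : IsAdmissible q x m (stairWord q m t hq) := by
  intro i r hr1 hr2 h ⟨h1, h2, h3⟩
  have hti : t ≤ i := by
    by_contra hc
    simp only [stairWord, if_neg (by omega : ¬ t ≤ i)] at h2
    omega
  have := h3 1 le_rfl hr1
  simp only [stairWord, if_pos (by omega : t ≤ i + 1)] at this
  omega

lemma Nadm_ge (q x m : ℕ) (hq : 2 ≤ q) : m + 1 ≤ Nadm q x m := by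
  have : Nat.card (Fin (m + 1)) ≤ Nadm q x m := by
    apply Nat.card_le_card_of_injective
      (fun t : Fin (m+1) => (⟨stairWord q m t hq, stairWord_adm q x m t hq⟩ :
        {w : Fin m → Fin q // IsAdmissible q x m w}))
    intro a b hab
    simp only [Subtype.mk.injEq] at hab
    by_contra hne
    have key : ∀ a b : Fin (m+1), (a:ℕ) < (b:ℕ) →
        stairWord q m a hq ≠ stairWord q m b hq := by
      intro a b hlt heq
      have hb := b.isLt
      have := congrFun heq ⟨a, by omega⟩
      simp only [stairWord, if_pos (le_refl (a:ℕ)),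
        if_neg (by omega : ¬ (b:ℕ) ≤ (a:ℕ))] at this
      have := congrArg (Fin.val) this
      simp at this
      omega
    rcases lt_trichotomy (a:ℕ) (b:ℕ) with h | h | h
    · exact key a b h hab
    · exact hne (Fin.ext h)
    · exact key b a h hab.symm
  simpa using this

lemma Nadm_subadd (q x a b : ℕ) : Nadm q x (a + b) ≤ Nadm q x a * Nadm q x b := by
  classical
  have key : Nadm q x (a + b) ≤
      Nat.card ({w : Fin a → Fin q // IsAdmissible q x a w} ×
        {w : Fin b → Fin q // IsAdmissible q x b w}) := by
    apply Nat.card_le_card_of_injective (fun w =>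
      (⟨⟨fun i => w.1 ⟨i.1, by omega⟩, by
          intro i r hr1 hr2 h ⟨h1, h2, h3⟩
          exact w.2 i r hr1 hr2 (by omega) ⟨h1, h2, h3⟩⟩,
        ⟨fun i => w.1 ⟨a + i.1, by omega⟩, by
          intro i r hr1 hr2 h ⟨h1, h2, h3⟩
          refine w.2 (a + i) r hr1 hr2 (by omega) ⟨?_, h2, ?_⟩
          · have : (⟨a + i + r + 1, by omega⟩ : Fin (a + b)) = ⟨a + (i + r + 1), by omega⟩ := by
              apply Fin.ext; simp; omega
            rw [this]; exact h1
          · intro j hj1 hj2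
            have : (⟨a + i + j, by omega⟩ : Fin (a + b)) = ⟨a + (i + j), by omega⟩ := by
              apply Fin.ext; simp; omega
            rw [this]; exact h3 j hj1 hj2⟩⟩))
    intro v w hvw
    simp only [Prod.mk.injEq, Subtype.mk.injEq] at hvw
    obtain ⟨hlo, hhi⟩ := hvw
    ext i
    rcases lt_or_ge i.1 a with hi | hi
    · have := congrFun (congrArg Subtype.val hlo) ⟨i.1, hi⟩
      simpa [Fin.ext_iff] using congrArg Fin.val this
    · have := congrFun (congrArg Subtype.val hhi) ⟨i.1 - a, by omega⟩
      have h2 := congrArg Fin.val this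
      simp only at h2
      have he : (⟨a + (i.1 - a), by omega⟩ : Fin (a + b)) = i := by
        apply Fin.ext; simp; omega
      rw [he] at h2
      exact h2
  rw [Nat.card_prod] at key
  exact key

open Filter Real in
/-- the limit `L = lim_m (log₂ N_q(m,x))/m` exists and the asymptotic rate of
the self-clocked QA-LOCO code, `lim_m (log₂(N_q(m,x) - 2))/(m + x)`, matches it: self-clocked
QA-LOCO codes are capacity-achieving for the `Q^q_x` constraint. -/
theorem stmt_14 (q x : ℕ) (hq : 2 ≤ q) (hx : 1 ≤ x) :
    ∃ L : ℝ,
      Tendsto (fun m : ℕ => Real.logb 2 (Nadm q x m) / m) atTop (nhds L) ∧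
      Tendsto (fun m : ℕ => Real.logb 2 ((Nadm q x m : ℝ) - 2) / ((m : ℝ) + x)) atTop
        (nhds L) := by
  have hxpos : (0:ℝ) < (x:ℝ) := by exact_mod_cast hx
  set u : ℕ → ℝ := fun m => Real.logb 2 (Nadm q x m) with hu
  have hNm : ∀ m : ℕ, ((m:ℝ) + 1) ≤ (Nadm q x m : ℝ) := fun m => by
    exact_mod_cast Nadm_ge q x m hq
  have hN1 : ∀ m : ℕ, (1:ℝ) ≤ (Nadm q x m : ℝ) := fun m => by
    have := hNm m
    have : (0:ℝ) ≤ (m:ℝ) := Nat.cast_nonneg m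
    linarith [hNm m]
  have hsub : Subadditive u := by
    intro a b
    have h1 : (Nadm q x (a+b) : ℝ) ≤ (Nadm q x a : ℝ) * (Nadm q x b : ℝ) := by
      exact_mod_cast Nadm_subadd q x a b
    have hcalc : u (a+b) ≤ Real.logb 2 ((Nadm q x a : ℝ) * (Nadm q x b : ℝ)) := by
      apply (Real.logb_le_logb one_lt_two (by linarith [hN1 (a+b)])
        (by nlinarith [hN1 a, hN1 b])).mpr h1
    calc u (a+b) ≤ Real.logb 2 ((Nadm q x a : ℝ) * (Nadm q x b : ℝ)) := hcalc
      _ = u a + u b := Real.logb_mul (by linarith [hN1 a]) (by linarith [hN1 b])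
  have hunn : ∀ m, 0 ≤ u m := fun m => Real.logb_nonneg one_lt_two (hN1 m)
  have hbdd : BddBelow (Set.range fun n : ℕ => u n / n) := by
    refine ⟨0, ?_⟩
    rintro y ⟨n, rfl⟩
    exact div_nonneg (hunn n) (Nat.cast_nonneg n)
  have hlim := hsub.tendsto_lim hbdd
  refine ⟨hsub.lim, hlim, ?_⟩
  -- second limit
  have htop : Tendsto (fun m : ℕ => (m:ℝ) + x) atTop atTop :=
    tendsto_atTop_add_const_right _ _ tendsto_natCast_atTop_atTop
  have hinv : Tendsto (fun m : ℕ => ((m:ℝ) + x)⁻¹) atTop (nhds 0) :=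
    tendsto_inv_atTop_zero.comp htop
  have hpos : ∀ m : ℕ, (0:ℝ) < (m:ℝ) + x := fun m => by
    have : (0:ℝ) ≤ (m:ℝ) := Nat.cast_nonneg m
    linarith
  have hratio : Tendsto (fun m : ℕ => (m:ℝ) / ((m:ℝ) + x)) atTop (nhds 1) := by
    have heq : (fun m : ℕ => (m:ℝ) / ((m:ℝ) + x))
        = fun m : ℕ => 1 - (x:ℝ) * ((m:ℝ) + x)⁻¹ := by
      funext m
      have h0 : (m:ℝ) + x ≠ 0 := ne_of_gt (hpos m)
      field_simp
      ring
    rw [heq]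
    have := (tendsto_const_nhds : Tendsto (fun _ : ℕ => (1:ℝ)) atTop (nhds 1)).sub
      (hinv.const_mul (x:ℝ))
    simpa using this
  have hA : Tendsto (fun m : ℕ => (u m / m) * ((m:ℝ) / ((m:ℝ) + x))) atTop
      (nhds (hsub.lim * 1)) := hlim.mul hratio
  rw [mul_one] at hA
  have hU : Tendsto (fun m : ℕ => u m / ((m:ℝ) + x)) atTop (nhds hsub.lim) := by
    apply hA.congr'
    filter_upwards [eventually_ge_atTop 1] with m hm
    have hm0 : (m:ℝ) ≠ 0 := by positivity
    have h0 : (m:ℝ) + x ≠ 0 := ne_of_gt (hpos m)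
    field_simp
  have hlog3 : Tendsto (fun m : ℕ => Real.logb 2 3 * ((m:ℝ) + x)⁻¹) atTop (nhds 0) := by
    simpa using hinv.const_mul (Real.logb 2 3)
  have hL : Tendsto (fun m : ℕ => u m / ((m:ℝ) + x) - Real.logb 2 3 * ((m:ℝ) + x)⁻¹)
      atTop (nhds hsub.lim) := by
    have := hU.sub hlog3
    simpa using this
  apply tendsto_of_tendsto_of_tendsto_of_le_of_le' hL hU
  · -- lower bound, for m ≥ 3
    filter_upwards [eventually_ge_atTop 3] with m hm
    have hmR : (3:ℝ) ≤ (m:ℝ) := by exact_mod_cast hm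
    have hN4 : (4:ℝ) ≤ (Nadm q x m : ℝ) := by linarith [hNm m]
    have hkey : u m ≤ Real.logb 2 3 + Real.logb 2 ((Nadm q x m : ℝ) - 2) := by
      have h1 : u m ≤ Real.logb 2 (3 * ((Nadm q x m : ℝ) - 2)) := by
        apply (Real.logb_le_logb one_lt_two (by linarith) (by nlinarith)).mpr
        nlinarith
      rwa [Real.logb_mul (by norm_num) (by intro h0; nlinarith)] at h1
    rw [sub_le_iff_le_add, div_add' _ _ _ (ne_of_gt (hpos m)),
      div_le_div_iff_of_pos_right (hpos m)]
    have hcancel : Real.logb 2 3 * ((m:ℝ)+x)⁻¹ * ((m:ℝ)+x) = Real.logb 2 3 := by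
      field_simp
    linarith [hkey, hcancel]
  · -- upper bound
    filter_upwards [eventually_ge_atTop 3] with m hm
    have hmR : (3:ℝ) ≤ (m:ℝ) := by exact_mod_cast hm
    have hN4 : (4:ℝ) ≤ (Nadm q x m : ℝ) := by linarith [hNm m]
    have hle : Real.logb 2 ((Nadm q x m : ℝ) - 2) ≤ u m :=
      (Real.logb_le_logb one_lt_two (by linarith) (by linarith)).mpr (by linarith)
    exact div_le_div_of_nonneg_right hle (hpos m).le
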